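/- arXiv:2405.06361 — 3 statements merged into one kernel-verified Lean document; each statement's English description precedes it below -/
import Mathlib

section
/- For two closed Euclidean balls of equal radius r in ℝ^d whose centers are at distance ε apart with 0 ≤ ε ≤ 2r, the volume of their symmetric difference equals 2·V_S·(1 − I_{(2rh−h²)/r²}((d+1)/2, 1/2)), where h = r − ε/2, V_S is the volume of a ball of radius r, and I_x(a,b) is the regularized incomplete beta function. -/
open MeasureTheory Metric
open Set intervalIntegral



noncomputable def betaFn (n : ℕ) (u : ℝ) : ℝ := u ^ ((n:ℝ)/2) * (1 - u) ^ (-(1/2) : ℝ)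

lemma betaFn_contOn (n : ℕ) : ContinuousOn (betaFn n) {u : ℝ | u < 1} := by
  refine ContinuousOn.mul ?_ ?_
  · exact continuousOn_id.rpow_const fun x _ => Or.inr (by positivity)
  · refine ((continuous_const.sub continuous_id).continuousOn).rpow_const fun x hx => ?_
    exact Or.inl (by simp only [mem_setOf_eq] at hx; intro h; simp at h; linarith)

lemma betaFn_integrableOn (n : ℕ) : IntegrableOn (betaFn n) (Icc (0:ℝ) 1) volume := by
  have hmeas : AEStronglyMeasurable (betaFn n) (volume.restrict (Icc (0:ℝ) 1)) := by
    rw [← Measure.restrict_congr_set Ico_ae_eq_Icc]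
    refine ContinuousOn.aestronglyMeasurable ?_ measurableSet_Ico
    exact (betaFn_contOn n).mono (fun x hx => hx.2)
  have hg : IntegrableOn (fun u : ℝ => (1 - u) ^ (-(1/2) : ℝ)) (Icc (0:ℝ) 1) volume := by
    have h1 : IntervalIntegrable (fun v : ℝ => v ^ (-(1/2) : ℝ)) volume 1 0 :=
      intervalIntegrable_rpow' (by norm_num)
    have h2 := h1.comp_sub_left 1
    rw [intervalIntegrable_iff_integrableOn_Icc_of_le (by norm_num)] at h2
    simpa using h2
  refine hg.mono' hmeas ?_
  filter_upwards [ae_restrict_mem measurableSet_Icc] with u hu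
  have h0 : (0:ℝ) ≤ u := hu.1
  have h1 : u ≤ 1 := hu.2
  have hb : (0:ℝ) ≤ (1 - u) ^ (-(1/2) : ℝ) := Real.rpow_nonneg (by linarith) _
  have hu1 : u ^ ((n:ℝ)/2) ≤ 1 := Real.rpow_le_one h0 h1 (by positivity)
  have hu0 : 0 ≤ u ^ ((n:ℝ)/2) := Real.rpow_nonneg h0 _
  simp only [betaFn]
  rw [Real.norm_eq_abs, abs_of_nonneg (mul_nonneg hu0 hb)]
  nlinarith

lemma betaFn_intervalIntegrable (n : ℕ) {a b : ℝ} (ha : a ∈ Icc (0:ℝ) 1) (hb : b ∈ Icc (0:ℝ) 1) :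
    IntervalIntegrable (betaFn n) volume a b := by
  rw [intervalIntegrable_iff]
  exact (betaFn_integrableOn n).mono_set (uIoc_subset_uIcc.trans (uIcc_subset_Icc ha hb))

lemma betaFn_J1_pos (n : ℕ) : 0 < ∫ u in (0:ℝ)..1, betaFn n u := by
  refine intervalIntegral_pos_of_pos_on (betaFn_intervalIntegrable n (by norm_num) (by norm_num)) ?_ one_pos
  intro u hu
  have h1 : 0 < u := hu.1
  have h2 : u < 1 := hu.2
  exact mul_pos (Real.rpow_pos_of_pos h1 _) (Real.rpow_pos_of_pos (by linarith) _)



lemma ptwise (n : ℕ) {r t : ℝ} (hr : 0 < r) (ht0 : 0 < t) (htr : t ≤ r) :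
    (-(2*t/r^2)) • betaFn n (1 - t^2/r^2)
      = (-2/r^(n+1)) * (Real.sqrt (r^2 - t^2))^n := by
  have hrt : (0:ℝ) ≤ r^2 - t^2 := by nlinarith
  have h3 : (((t/r))^(2:ℕ) : ℝ) ^ (-(1/2) : ℝ) = r/t := by
    rw [← Real.rpow_natCast (t/r) 2, ← Real.rpow_mul (by positivity)]
    norm_num
    rw [Real.rpow_neg_one, inv_div]
  have h4 : (Real.sqrt (r^2 - t^2))^n = (r^2 - t^2) ^ ((n:ℝ)/2) := by
    rw [Real.sqrt_eq_rpow, ← Real.rpow_natCast ((r^2-t^2) ^ ((1:ℝ)/2)) n,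
      ← Real.rpow_mul hrt]
    ring_nf
  have h6 : ((r:ℝ)^2) ^ ((n:ℝ)/2) = r ^ (n:ℕ) := by
    rw [← Real.rpow_natCast r 2, ← Real.rpow_mul hr.le,
      show ((2:ℕ):ℝ) * ((n:ℝ)/2) = (n:ℝ) by push_cast; ring, Real.rpow_natCast]
  have e1 : betaFn n (1 - t^2/r^2) = ((r^2-t^2) ^ ((n:ℝ)/2) / r^n) * (r/t) := by
    rw [betaFn, show (1:ℝ) - (1 - t^2/r^2) = (t/r)^2 by field_simp; ring,
      show (1:ℝ) - t^2/r^2 = (r^2-t^2)/r^2 by field_simp,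
      Real.div_rpow hrt (by positivity : (0:ℝ) ≤ r^2), h6, h3]
  rw [e1, h4]
  have hn : (0:ℝ) < r ^ (n:ℕ) := by positivity
  rw [smul_eq_mul, pow_succ]
  field_simp
  ring

lemma keysub (n : ℕ) {r s : ℝ} (hr : 0 < r) (h0 : 0 ≤ s) (hsr : s ≤ r) :
    ∫ u in (0:ℝ)..(1 - s^2/r^2), betaFn n u
      = (2 / r^(n+1)) * ∫ t in s..r, (Real.sqrt (r^2 - t^2))^n := by
  set φ : ℝ → ℝ := fun t => 1 - t^2/r^2 with hφ
  have hφr : φ r = 0 := by simp only [hφ]; field_simp; norm_num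
  have hφc : ContinuousOn φ (uIcc s r) := by fun_prop
  have hder : ∀ t ∈ Ioo (min s r) (max s r),
      HasDerivWithinAt φ (-(2*t/r^2)) (Ioi t) t := by
    intro t _
    have h := ((hasDerivAt_pow 2 t).div_const (r^2)).const_sub 1
    have : HasDerivAt φ (-(2*t/r^2)) t := by
      refine h.congr_deriv ?_
      norm_num
    exact this.hasDerivWithinAt
  have himIoo : φ '' Ioo (min s r) (max s r) ⊆ {u : ℝ | u < 1} := by
    rintro _ ⟨t, ht, rfl⟩
    rw [min_eq_left hsr, max_eq_right hsr] at ht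
    have ht0 : 0 < t := lt_of_le_of_lt h0 ht.1
    have : 0 < t^2/r^2 := by positivity
    simp only [hφ, mem_setOf_eq]
    linarith
  have himIcc : φ '' uIcc s r ⊆ Icc (0:ℝ) 1 := by
    rintro _ ⟨t, ht, rfl⟩
    rw [uIcc_of_le hsr] at ht
    have h1 : 0 ≤ t := le_trans h0 ht.1
    have h2 : t ≤ r := ht.2
    have ha : t^2 ≤ r^2 := by nlinarith
    have hb : t^2/r^2 ≤ 1 := by rw [div_le_one (by positivity)]; exact ha
    have hc : 0 ≤ t^2/r^2 := by positivity
    exact ⟨by simp only [hφ]; linarith, by simp only [hφ]; linarith⟩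
  have hae : ∀ᵐ t : ℝ ∂(volume.restrict (uIcc s r)), t ≠ 0 := by
    refine ae_restrict_of_ae ?_
    exact compl_mem_ae_iff.2 (measure_singleton 0)
  have hg2 : IntegrableOn (fun t => (-(2*t/r^2)) • (betaFn n ∘ φ) t) (uIcc s r) volume := by
    have hcont : Continuous fun t : ℝ => (-2/r^(n+1)) * (Real.sqrt (r^2 - t^2))^n := by
      fun_prop
    refine (hcont.integrableOn_uIcc).congr ?_
    filter_upwards [hae, ae_restrict_mem measurableSet_uIcc] with t ht htm
    rw [uIcc_of_le hsr] at htm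
    have ht0 : 0 < t := lt_of_le_of_ne (le_trans h0 htm.1) (Ne.symm ht)
    exact (ptwise n hr ht0 htm.2).symm
  have hsub := integral_comp_smul_deriv''' (f := φ) (f' := fun t => -(2*t/r^2))
      (g := betaFn n) (a := s) (b := r) hφc hder
      ((betaFn_contOn n).mono himIoo)
      ((betaFn_integrableOn n).mono_set himIcc)
      (by rw [uIcc_comm] at hg2 ⊢; exact hg2)
  have hL : ∫ x in s..r, (fun t => -(2*t/r^2)) x • (betaFn n ∘ φ) x
      = -((2/r^(n+1)) * ∫ t in s..r, (Real.sqrt (r^2 - t^2))^n) := by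
    have hc : ∀ᵐ x ∂volume, x ∈ Set.uIoc s r →
        (fun t => -(2*t/r^2)) x • (betaFn n ∘ φ) x
          = (-2/r^(n+1)) * (Real.sqrt (r^2 - x^2))^n := by
      filter_upwards with x hx
      rw [uIoc_of_le hsr] at hx
      exact ptwise n hr (lt_of_le_of_lt h0 hx.1) hx.2
    rw [integral_congr_ae hc, intervalIntegral.integral_const_mul]
    ring
  rw [hL, hφr] at hsub
  have hφs : φ s = 1 - s^2/r^2 := rfl
  rw [integral_symm, ← hφs]
  linarith [hsub]

lemma pi_sublevel_volume (n : ℕ) {c : ℝ} (hc : 0 ≤ c) :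
    volume {z : Fin n → ℝ | ∑ i, z i^2 ≤ c}
      = ENNReal.ofReal ((Real.sqrt c)^n)
          * volume (closedBall (0 : EuclideanSpace ℝ (Fin n)) 1) := by
  have hset : {z : Fin n → ℝ | ∑ i, z i^2 ≤ c}
      = ((MeasurableEquiv.toLp 2 (Fin n → ℝ)).symm).symm ⁻¹'
          (closedBall (0 : EuclideanSpace ℝ (Fin n)) (Real.sqrt c)) := by
    ext z
    simp only [mem_setOf_eq, mem_preimage, mem_closedBall_zero_iff]
    rw [EuclideanSpace.norm_eq]
    have hz : ∀ i : Fin n,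
        ‖((MeasurableEquiv.toLp 2 (Fin n → ℝ)).symm.symm z) i‖ ^ 2 = z i ^ 2 := by
      intro i
      rw [Real.norm_eq_abs, sq_abs]
      rfl
    simp_rw [hz]
    constructor
    · intro h
      exact Real.sqrt_le_sqrt h
    · intro h
      calc ∑ i, z i ^2 = Real.sqrt (∑ i, z i ^2) ^ 2 := (Real.sq_sqrt (by positivity)).symm
        _ ≤ Real.sqrt c ^ 2 := by nlinarith [Real.sqrt_nonneg (∑ i, z i ^2)]
        _ = c := Real.sq_sqrt hc
  rw [hset,
    ((EuclideanSpace.volume_preserving_symm_measurableEquiv_toLp (Fin n)).symm _).measure_preimage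
      measurableSet_closedBall.nullMeasurableSet,
    Measure.addHaar_closedBall' _ _ (Real.sqrt_nonneg c), finrank_euclideanSpace_fin]

lemma interA (n : ℕ) {r ε : ℝ} (hr : 0 < r) (hε0 : 0 ≤ ε) (hε : ε ≤ 2*r) :
    volume (closedBall (0 : EuclideanSpace ℝ (Fin (n+1))) r
        ∩ closedBall (EuclideanSpace.single (0 : Fin (n+1)) ε) r)
      = ENNReal.ofReal (2 * ∫ t in (ε/2)..r, (Real.sqrt (r^2 - t^2))^n)
          * volume (closedBall (0 : EuclideanSpace ℝ (Fin n)) 1) := by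
  classical
  set S := closedBall (0 : EuclideanSpace ℝ (Fin (n+1))) r
      ∩ closedBall (EuclideanSpace.single (0 : Fin (n+1)) ε) r with hS
  set F : EuclideanSpace ℝ (Fin (n+1)) ≃ᵐ ℝ × (Fin n → ℝ) :=
    ((MeasurableEquiv.toLp 2 (Fin (n+1) → ℝ)).symm).trans
      (MeasurableEquiv.piFinSuccAbove (fun _ : Fin (n+1) => ℝ) 0) with hF
  have hFmp : MeasurePreserving F volume volume :=
    (volume_preserving_piFinSuccAbove (fun _ : Fin (n+1) => ℝ) 0).comp
      (EuclideanSpace.volume_preserving_symm_measurableEquiv_toLp (Fin (n+1)))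
  have hSm : MeasurableSet S :=
    measurableSet_closedBall.inter measurableSet_closedBall
  have hvol : volume S = volume (F.symm ⁻¹' S) :=
    ((hFmp.symm F).measure_preimage hSm.nullMeasurableSet).symm
  -- identify the preimage
  set c : ℝ → ℝ := fun t => min (r^2 - t^2) (r^2 - (t-ε)^2) with hc
  have hpre : F.symm ⁻¹' S = {p : ℝ × (Fin n → ℝ) | ∑ i, p.2 i^2 ≤ c p.1} := by
    ext p
    have hins : (F.symm p : EuclideanSpace ℝ (Fin (n+1)))
        = WithLp.toLp 2 (Fin.insertNth (0 : Fin (n+1)) p.1 p.2) := rfl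
    have hcoord : ∀ i : Fin (n+1),
        (F.symm p : EuclideanSpace ℝ (Fin (n+1))) i = (Fin.cons p.1 p.2 : Fin (n+1) → ℝ) i := by
      intro i
      rw [hins, Fin.insertNth_zero]
      simp
    have hsum1 : ∑ i : Fin (n+1), ‖(F.symm p : EuclideanSpace ℝ (Fin (n+1))) i‖^2
        = p.1^2 + ∑ i : Fin n, p.2 i^2 := by
      simp_rw [hcoord, Real.norm_eq_abs, sq_abs]
      rw [Fin.sum_univ_succ]
      simp
    have hsum2 : ∑ i : Fin (n+1),
        dist ((F.symm p : EuclideanSpace ℝ (Fin (n+1))) i)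
          ((EuclideanSpace.single (0 : Fin (n+1)) ε) i) ^2
        = (p.1 - ε)^2 + ∑ i : Fin n, p.2 i^2 := by
      simp_rw [hcoord, Real.dist_eq]
      rw [Fin.sum_univ_succ]
      simp [EuclideanSpace.single_apply, sq_abs, Fin.succ_ne_zero]
    simp only [hS, mem_preimage, mem_inter_iff, mem_closedBall, mem_setOf_eq]
    rw [dist_zero_right, EuclideanSpace.norm_eq, EuclideanSpace.dist_eq, hsum1, hsum2, hc]
    have h1 : Real.sqrt (p.1^2 + ∑ i : Fin n, p.2 i^2) ≤ r
        ↔ p.1^2 + ∑ i : Fin n, p.2 i^2 ≤ r^2 := by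
      rw [show r = Real.sqrt (r^2) by rw [Real.sqrt_sq hr.le]]
      rw [Real.sqrt_le_sqrt_iff (by positivity), Real.sqrt_sq hr.le]
    have h2 : Real.sqrt ((p.1-ε)^2 + ∑ i : Fin n, p.2 i^2) ≤ r
        ↔ (p.1-ε)^2 + ∑ i : Fin n, p.2 i^2 ≤ r^2 := by
      rw [show r = Real.sqrt (r^2) by rw [Real.sqrt_sq hr.le]]
      rw [Real.sqrt_le_sqrt_iff (by positivity), Real.sqrt_sq hr.le]
    rw [h1, h2, le_min_iff]
    constructor
    · rintro ⟨a, b⟩; exact ⟨by linarith, by linarith⟩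
    · rintro ⟨a, b⟩; exact ⟨by linarith, by linarith⟩
  set C := volume (closedBall (0 : EuclideanSpace ℝ (Fin n)) 1) with hC
  have hTm : MeasurableSet {p : ℝ × (Fin n → ℝ) | ∑ i, p.2 i^2 ≤ c p.1} := by
    rw [← hpre]; exact F.symm.measurable hSm
  have hccont : Continuous c := by
    refine Continuous.min ?_ ?_ <;> fun_prop
  have hgcont : Continuous (fun t : ℝ => (Real.sqrt (c t))^n) :=
    (Real.continuous_sqrt.comp hccont).pow n
  have hval : ∀ t : ℝ, volume {z : Fin n → ℝ | ∑ i, z i^2 ≤ c t}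
      = (Icc (ε - r) r).indicator
          (fun t => ENNReal.ofReal ((Real.sqrt (c t))^n) * C) t := by
    intro t
    by_cases ht : t ∈ Icc (ε - r) r
    · rw [indicator_of_mem ht]
      have h1 : (0:ℝ) ≤ r^2 - t^2 := by
        have := ht.1; have := ht.2; nlinarith
      have h2 : (0:ℝ) ≤ r^2 - (t - ε)^2 := by
        have := ht.1; have := ht.2; nlinarith
      exact pi_sublevel_volume n (le_min h1 h2)
    · rw [indicator_of_notMem ht]
      have hneg : c t < 0 := by
        rw [mem_Icc, not_and_or] at ht
        rcases ht with ht | ht <;> push_neg at ht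
        · refine lt_of_le_of_lt (min_le_right _ _) ?_; nlinarith
        · refine lt_of_le_of_lt (min_le_left _ _) ?_; nlinarith
      have : {z : Fin n → ℝ | ∑ i, z i^2 ≤ c t} = ∅ := by
        ext z
        simp only [mem_setOf_eq, mem_empty_iff_false, iff_false, not_le]
        calc c t < 0 := hneg
          _ ≤ ∑ i, z i^2 := by positivity
      rw [this, measure_empty]
  rw [hvol, hpre, Measure.volume_eq_prod, Measure.prod_apply hTm]
  have hlin : (∫⁻ t, volume (Prod.mk t ⁻¹' {p : ℝ × (Fin n → ℝ) | ∑ i, p.2 i^2 ≤ c p.1}))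
      = ∫⁻ t in Icc (ε - r) r, ENNReal.ofReal ((Real.sqrt (c t))^n) * C := by
    rw [← lintegral_indicator measurableSet_Icc]
    exact lintegral_congr fun t => hval t
  rw [hlin, lintegral_mul_const' _ _ (by exact (measure_closedBall_lt_top).ne),
    ← ofReal_integral_eq_lintegral_ofReal (hgcont.integrableOn_Icc)
      (Filter.Eventually.of_forall fun t => by positivity)]
  congr 1
  -- now the real integral computation
  have hle1 : ε - r ≤ ε/2 := by linarith
  have hle2 : ε/2 ≤ r := by linarith
  have heq : ∫ t in Icc (ε - r) r, (Real.sqrt (c t))^n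
      = ∫ t in (ε - r)..r, (Real.sqrt (c t))^n := by
    rw [intervalIntegral.integral_of_le (by linarith), integral_Icc_eq_integral_Ioc]
  have hsplit : ∫ t in (ε - r)..r, (Real.sqrt (c t))^n
      = (∫ t in (ε - r)..(ε/2), (Real.sqrt (c t))^n)
        + ∫ t in (ε/2)..r, (Real.sqrt (c t))^n :=
    (integral_add_adjacent_intervals (hgcont.intervalIntegrable _ _)
      (hgcont.intervalIntegrable _ _)).symm
  have hcsymm : ∀ x : ℝ, c (ε - x) = c x := by
    intro x
    simp only [hc]
    rw [min_comm]
    congr 1 <;> ring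
  have hrefl : ∫ t in (ε - r)..(ε/2), (Real.sqrt (c t))^n
      = ∫ t in (ε/2)..r, (Real.sqrt (c t))^n := by
    have h := intervalIntegral.integral_comp_sub_left
      (a := ε/2) (b := r) (fun t => (Real.sqrt (c t))^n) ε
    have h2 : ∫ x in (ε/2)..r, (Real.sqrt (c (ε - x)))^n
        = ∫ x in (ε/2)..r, (Real.sqrt (c x))^n := by
      refine intervalIntegral.integral_congr fun x _ => ?_
      rw [hcsymm]
    rw [h2] at h
    have h3 : ε - ε/2 = ε/2 := by ring
    rw [h3] at h
    exact h.symm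
  have hlast : ∫ t in (ε/2)..r, (Real.sqrt (c t))^n
      = ∫ t in (ε/2)..r, (Real.sqrt (r^2 - t^2))^n := by
    refine intervalIntegral.integral_congr fun t ht => ?_
    rw [uIcc_of_le hle2] at ht
    have h1 : 0 ≤ t - ε/2 := by linarith [ht.1]
    have : c t = r^2 - t^2 := by
      simp only [hc]
      refine min_eq_left ?_
      nlinarith [ht.1, ht.2]
    rw [this]
  rw [heq, hsplit, hrefl, hlast, two_mul]

/-- The regularized incomplete beta function `I_x(a, b)`. -/
noncomputable def regIncBeta (a b x : ℝ) : ℝ :=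
  (∫ t in (0 : ℝ)..x, t ^ (a - 1) * (1 - t) ^ (b - 1)) /
    ∫ t in (0 : ℝ)..1, t ^ (a - 1) * (1 - t) ^ (b - 1)

/-- for two closed Euclidean balls of equal radius `r` in `ℝ^d` with centers
at distance `ε`, `0 ≤ ε ≤ 2r`, the volume of their symmetric difference equals
`2 · V_S · (1 − I_{(2rh−h²)/r²}((d+1)/2, 1/2))` with `h = r − ε/2`. -/
theorem stmt_5 {d : ℕ} (hd : 1 ≤ d) (r ε : ℝ) (hr : 0 < r)
    (hε0 : 0 ≤ ε) (hε : ε ≤ 2 * r)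
    (x xt : EuclideanSpace ℝ (Fin d)) (hdist : dist x xt = ε) :
    (volume ((Metric.closedBall x r \ Metric.closedBall xt r) ∪
        (Metric.closedBall xt r \ Metric.closedBall x r))).toReal =
      2 * (volume (Metric.closedBall x r)).toReal *
        (1 - regIncBeta (((d : ℝ) + 1) / 2) (1 / 2)
          ((2 * r * (r - ε / 2) - (r - ε / 2) ^ 2) / r ^ 2)) := by
  obtain ⟨n, rfl⟩ : ∃ n, d = n + 1 := ⟨d - 1, (Nat.succ_pred_eq_of_pos hd).symm⟩
  classical
  set A := closedBall x r with hA
  set B := closedBall xt r with hB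
  -- the isometric reduction to centers 0 and w
  set w : EuclideanSpace ℝ (Fin (n+1)) := EuclideanSpace.single (0 : Fin (n+1)) ε with hw
  have hnorm : ‖xt - x‖ = ε := by rw [← dist_eq_norm, dist_comm]; exact hdist
  have hwnorm : ‖w‖ = ε := by
    rw [hw, EuclideanSpace.norm_single, Real.norm_eq_abs, abs_of_nonneg hε0]
  set L := Submodule.reflection (ℝ ∙ ((xt - x) - w))ᗮ with hL
  have hLmap : L (xt - x) = w := Submodule.reflection_sub (by rw [hnorm, hwnorm])
  set φ : EuclideanSpace ℝ (Fin (n+1)) → EuclideanSpace ℝ (Fin (n+1)) :=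
    fun y => L (y - x) with hφ
  have hφmp : MeasurePreserving φ volume volume :=
    (L.measurePreserving).comp (measurePreserving_sub_right volume x)
  have hpre1 : φ ⁻¹' (closedBall 0 r) = A := by
    ext y
    simp only [hφ, mem_preimage, mem_closedBall, hA, dist_eq_norm]
    rw [sub_zero, L.norm_map]
  have hpre2 : φ ⁻¹' (closedBall w r) = B := by
    ext y
    simp only [hφ, mem_preimage, mem_closedBall, hB, dist_eq_norm]
    rw [← hLmap, ← map_sub, L.norm_map, sub_sub_sub_cancel_right]
  -- intersection volumes
  have hABm : MeasurableSet (closedBall (0 : EuclideanSpace ℝ (Fin (n+1))) r ∩ closedBall w r) :=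
    measurableSet_closedBall.inter measurableSet_closedBall
  have hinter : volume (A ∩ B) = volume (closedBall (0 : EuclideanSpace ℝ (Fin (n+1))) r ∩ closedBall w r) := by
    rw [← hpre1, ← hpre2, ← preimage_inter]
    exact hφmp.measure_preimage hABm.nullMeasurableSet
  set C := volume (closedBall (0 : EuclideanSpace ℝ (Fin n)) 1) with hC
  set K : ℝ := ∫ t in (ε/2)..r, (Real.sqrt (r^2 - t^2))^n with hK
  set K0 : ℝ := ∫ t in (0:ℝ)..r, (Real.sqrt (r^2 - t^2))^n with hK0
  have hKnn : 0 ≤ K :=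
    intervalIntegral.integral_nonneg (by linarith) (fun t _ => by positivity)
  have hK0nn : 0 ≤ K0 :=
    intervalIntegral.integral_nonneg hr.le (fun t _ => by positivity)
  have hIval : volume (A ∩ B) = ENNReal.ofReal (2 * K) * C := by
    rw [hinter]; exact interA n hr hε0 hε
  have hVval : volume A = ENNReal.ofReal (2 * K0) * C := by
    have h0 : (EuclideanSpace.single (0 : Fin (n+1)) (0:ℝ)) = 0 := by
      ext i; simp [EuclideanSpace.single_apply]
    have := interA n (r := r) (ε := 0) hr le_rfl (by linarith)
    rw [h0, inter_self] at this
    rw [hA, Measure.addHaar_closedBall_center volume x, this]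
    norm_num
    rfl
  have hVB : volume B = volume A := by
    rw [hA, hB, Measure.addHaar_closedBall_center volume x,
      Measure.addHaar_closedBall_center volume xt]
  -- finiteness
  have hAfin : volume A ≠ ⊤ := measure_closedBall_lt_top.ne
  have hBfin : volume B ≠ ⊤ := measure_closedBall_lt_top.ne
  have hABfin : volume (A ∩ B) ≠ ⊤ :=
    ((measure_mono inter_subset_left).trans_lt measure_closedBall_lt_top).ne
  have hAm : MeasurableSet A := measurableSet_closedBall
  have hBm : MeasurableSet B := measurableSet_closedBall
  -- symmetric difference decomposition
  have hdiff1 : volume (A \ B) = volume A - volume (A ∩ B) := by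
    rw [← Set.diff_self_inter]
    exact measure_diff inter_subset_left (hAm.inter hBm).nullMeasurableSet hABfin
  have hdiff2 : volume (B \ A) = volume B - volume (A ∩ B) := by
    rw [← Set.diff_self_inter, Set.inter_comm A B]
    exact measure_diff inter_subset_left (hBm.inter hAm).nullMeasurableSet
      (by rw [Set.inter_comm]; exact hABfin)
  have hunion : volume ((A \ B) ∪ (B \ A)) = volume (A \ B) + volume (B \ A) :=
    measure_union (disjoint_sdiff_sdiff) (hBm.diff hAm)
  have hd1fin : volume (A \ B) ≠ ⊤ := ((measure_mono diff_subset).trans_lt measure_closedBall_lt_top).ne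
  have hd2fin : volume (B \ A) ≠ ⊤ := ((measure_mono diff_subset).trans_lt measure_closedBall_lt_top).ne
  -- toReal computations
  have hCfin : C ≠ ⊤ := measure_closedBall_lt_top.ne
  have htA : (volume A).toReal = 2 * K0 * C.toReal := by
    rw [hVval, ENNReal.toReal_mul, ENNReal.toReal_ofReal (by linarith)]
  have htI : (volume (A ∩ B)).toReal = 2 * K * C.toReal := by
    rw [hIval, ENNReal.toReal_mul, ENNReal.toReal_ofReal (by linarith)]
  have hIleA : volume (A ∩ B) ≤ volume A := measure_mono inter_subset_left
  have hIleB : volume (A ∩ B) ≤ volume B := measure_mono inter_subset_right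
  have hLHS : (volume ((A \ B) ∪ (B \ A))).toReal
      = 2 * ((volume A).toReal - (volume (A ∩ B)).toReal) := by
    rw [hunion, ENNReal.toReal_add hd1fin hd2fin, hdiff1, hdiff2,
      ENNReal.toReal_sub_of_le hIleA hAfin, ENNReal.toReal_sub_of_le hIleB hBfin, hVB]
    ring
  -- beta side
  have hsub1 := keysub n (s := ε/2) hr (by linarith) (by linarith)
  have hsub0 := keysub n (s := 0) hr le_rfl hr.le
  rw [show (1:ℝ) - (0:ℝ)^2/r^2 = 1 by norm_num] at hsub0
  have hX : (2 * r * (r - ε / 2) - (r - ε / 2) ^ 2) / r ^ 2 = 1 - (ε/2)^2/r^2 := by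
    field_simp
    ring
  have hbeta : regIncBeta ((((n+1 : ℕ) : ℝ) + 1)/2) (1/2)
      ((2 * r * (r - ε / 2) - (r - ε / 2) ^ 2) / r ^ 2)
      = (∫ u in (0:ℝ)..(1 - (ε/2)^2/r^2), betaFn n u) / (∫ u in (0:ℝ)..1, betaFn n u) := by
    have ha : ((((n+1:ℕ):ℝ) + 1)/2) - 1 = (n:ℝ)/2 := by push_cast; ring
    have hb : (1:ℝ)/2 - 1 = -(1/2) := by norm_num
    rw [regIncBeta, hX, ha, hb]
    simp only [betaFn]
  have hJ1pos := betaFn_J1_pos n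
  have hK0pos : 0 < K0 := by
    rw [hsub0, ← hK0] at hJ1pos
    have hcpos : (0:ℝ) < 2 / r^(n+1) := by positivity
    nlinarith [hJ1pos, hK0nn, hcpos]
  have hCt : (0:ℝ) ≤ C.toReal := ENNReal.toReal_nonneg
  rw [hLHS, hbeta, hsub1, hsub0, htA, htI]
  have hc2 : (2:ℝ)/r^(n+1) ≠ 0 := by positivity
  rw [mul_div_mul_left K K0 hc2]
  field_simp
end

section
/- The volume of a hyperspherical cap of height h (0 ≤ h ≤ r) of a d-dimensional Euclidean ball of radius r equals (1/2)·V_S·I_{(2rh−h²)/r²}((d+1)/2, 1/2), where V_S is the volume of the full ball and I_x(a,b) is the regularized incomplete beta function. -/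
open MeasureTheory Metric

section capAux

open intervalIntegral Set Filter Topology

lemma capAux_ball_pi (d : ℕ) (c : ℝ) (hc : 0 ≤ c) :
    volume {x : Fin d → ℝ | ∑ j, x j ^ 2 ≤ c} =
      ENNReal.ofReal (Real.sqrt c ^ d) *
        volume (Metric.ball (0 : EuclideanSpace ℝ (Fin d)) 1) := by
  have hmeas : MeasurableSet {x : Fin d → ℝ | ∑ j, x j ^ 2 ≤ c} :=
    measurableSet_le (by fun_prop) measurable_const
  have h1 := (EuclideanSpace.volume_preserving_symm_measurableEquiv_toLp (Fin d)).measure_preimage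
    hmeas.nullMeasurableSet
  have h2 : (MeasurableEquiv.toLp 2 (Fin d → ℝ)).symm ⁻¹' {x : Fin d → ℝ | ∑ j, x j ^ 2 ≤ c}
      = Metric.closedBall (0 : EuclideanSpace ℝ (Fin d)) (Real.sqrt c) := by
    ext y
    simp only [Set.mem_preimage, Set.mem_setOf_eq, Metric.mem_closedBall, dist_zero_right,
      EuclideanSpace.norm_eq]
    rw [← Real.sqrt_le_sqrt_iff (by positivity)]
    simp [MeasurableEquiv.coe_toLp_symm, sq_abs]
  rw [← h1, h2, Measure.addHaar_closedBall _ _ (Real.sqrt_nonneg c), finrank_euclideanSpace_fin]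

lemma capAux_slice_pi (d : ℕ) (r a : ℝ) (hr : 0 < r) (ha : -r ≤ a) (har : a ≤ r) :
    volume {x : Fin (d+1) → ℝ | ∑ i, x i ^ 2 ≤ r ^ 2 ∧ a ≤ x (Fin.last d)} =
      ENNReal.ofReal (∫ t in a..r, Real.sqrt (r ^ 2 - t ^ 2) ^ d) *
        volume (Metric.ball (0 : EuclideanSpace ℝ (Fin d)) 1) := by
  set κ := volume (Metric.ball (0 : EuclideanSpace ℝ (Fin d)) 1) with hκ
  set T : Set (ℝ × (Fin d → ℝ)) :=
    {p | p.1 ^ 2 + ∑ j, p.2 j ^ 2 ≤ r ^ 2 ∧ a ≤ p.1} with hT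
  have hTmeas : MeasurableSet T := by
    rw [hT, Set.setOf_and]
    exact (measurableSet_le (by fun_prop) measurable_const).inter
      (measurableSet_le measurable_const (by fun_prop))
  have h2 : volume {x : Fin (d+1) → ℝ | ∑ i, x i ^ 2 ≤ r ^ 2 ∧ a ≤ x (Fin.last d)}
      = (volume.prod volume) T := by
    have hmp := measurePreserving_piFinSuccAbove (fun _ : Fin (d+1) => (volume : Measure ℝ))
      (Fin.last d)
    have hv : (volume : Measure (Fin d → ℝ)) = Measure.pi fun _ => volume := volume_pi
    have hv2 : (volume : Measure (Fin (d+1) → ℝ)) = Measure.pi fun _ => volume := volume_pi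
    rw [hv, hv2, ← hmp.measure_preimage hTmeas.nullMeasurableSet]
    congr 1
    ext x
    simp only [hT, Set.mem_preimage, Set.mem_setOf_eq, MeasurableEquiv.piFinSuccAbove_apply,
      Fin.insertNthEquiv_symm_apply, Fin.removeNth]
    rw [← Fin.sum_univ_succAbove (fun i => x i ^ 2) (Fin.last d)]
  rw [h2, Measure.prod_apply hTmeas]
  have h3 : ∀ t : ℝ, volume (Prod.mk t ⁻¹' T) =
      Set.indicator (Set.Icc a r)
        (fun t => ENNReal.ofReal (Real.sqrt (r ^ 2 - t ^ 2) ^ d) * κ) t := by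
    intro t
    by_cases ht : t ∈ Set.Icc a r
    · rw [Set.indicator_of_mem ht]
      have hpre : Prod.mk t ⁻¹' T = {x : Fin d → ℝ | ∑ j, x j ^ 2 ≤ r ^ 2 - t ^ 2} := by
        ext x
        simp only [hT, Set.mem_preimage, Set.mem_setOf_eq]
        constructor
        · rintro ⟨h1, _⟩; linarith
        · intro h1; exact ⟨by linarith, ht.1⟩
      rw [hpre, capAux_ball_pi d _ (by nlinarith [ht.1, ht.2, ha])]
    · rw [Set.indicator_of_notMem ht]
      have : Prod.mk t ⁻¹' T = ∅ := by
        ext x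
        simp only [hT, Set.mem_preimage, Set.mem_setOf_eq, Set.mem_empty_iff_false, iff_false,
          not_and]
        intro h1 h2
        rw [Set.mem_Icc] at ht
        push_neg at ht
        have := ht h2
        have hx : (0:ℝ) ≤ ∑ j, x j ^ 2 := by positivity
        nlinarith
      rw [this, measure_empty]
  rw [lintegral_congr h3, lintegral_indicator measurableSet_Icc _,
    lintegral_mul_const _ (by fun_prop)]
  congr 1
  rw [intervalIntegral.integral_of_le har, ← MeasureTheory.integral_Icc_eq_integral_Ioc,
    MeasureTheory.ofReal_integral_eq_lintegral_ofReal]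
  · exact (Continuous.integrableOn_Icc (by continuity))
  · exact Filter.Eventually.of_forall fun t => by positivity

lemma capAux_slice (d : ℕ) (r a : ℝ) (hr : 0 < r) (ha : -r ≤ a) (har : a ≤ r) :
    volume {y : EuclideanSpace ℝ (Fin (d + 1)) |
        y ∈ Metric.closedBall (0 : EuclideanSpace ℝ (Fin (d + 1))) r ∧
        a ≤ y (Fin.last d)} =
      ENNReal.ofReal (∫ t in a..r, Real.sqrt (r ^ 2 - t ^ 2) ^ d) *
        volume (Metric.ball (0 : EuclideanSpace ℝ (Fin d)) 1) := by
  have key : ∀ S : ℝ, 0 ≤ S → (Real.sqrt S ≤ r ↔ S ≤ r ^ 2) := by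
    intro S hS
    conv_lhs => rw [← Real.sqrt_sq hr.le]
    exact Real.sqrt_le_sqrt_iff (by positivity)
  set Spi : Set (Fin (d + 1) → ℝ) :=
    {x | ∑ i, x i ^ 2 ≤ r ^ 2 ∧ a ≤ x (Fin.last d)} with hSpi
  have hSpimeas : MeasurableSet Spi := by
    rw [hSpi, Set.setOf_and]
    exact (measurableSet_le (by fun_prop) measurable_const).inter
      (measurableSet_le measurable_const (by fun_prop))
  have h1 : volume {y : EuclideanSpace ℝ (Fin (d + 1)) |
        y ∈ Metric.closedBall (0 : EuclideanSpace ℝ (Fin (d + 1))) r ∧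
        a ≤ y (Fin.last d)} = volume Spi := by
    rw [← (EuclideanSpace.volume_preserving_symm_measurableEquiv_toLp (Fin (d+1))).measure_preimage
      hSpimeas.nullMeasurableSet]
    congr 1
    ext y
    simp only [Set.mem_preimage, hSpi, Set.mem_setOf_eq, Metric.mem_closedBall, dist_zero_right,
      EuclideanSpace.norm_eq, MeasurableEquiv.coe_toLp_symm,
      Real.norm_eq_abs, sq_abs]
    rw [key _ (by positivity)]
  rw [h1]
  exact capAux_slice_pi d r a hr ha har

lemma capAux_subst_lt (d : ℕ) (r h : ℝ) (hr : 0 < r) (hh0 : 0 ≤ h) (hhr : h < r) :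
    ∫ t in (0:ℝ)..(2*r*h - h^2)/r^2, Real.sqrt t ^ d * (1 - t) ^ (-(1/2) : ℝ)
      = (2 / r^(d+1)) * ∫ u in (0:ℝ)..h, Real.sqrt (2*r*u - u^2) ^ d := by
  set f : ℝ → ℝ := fun u => (2*r*u - u^2)/r^2 with hf
  set f' : ℝ → ℝ := fun u => (2*r - 2*u)/r^2 with hf'
  set G : ℝ → ℝ := fun t => Real.sqrt t ^ d * (1 - t) ^ (-(1/2) : ℝ) with hG
  have hder : ∀ u ∈ uIcc (0:ℝ) h, HasDerivAt f (f' u) u := by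
    intro u _
    have : HasDerivAt (fun u : ℝ => (2*r*u - u^2)/r^2) ((2*r*1 - 2*u^1)/r^2) u := by
      exact (((hasDerivAt_id u).const_mul (2*r)).sub (hasDerivAt_pow 2 u)).div_const (r^2)
    simpa [hf, hf'] using this.congr_deriv (by ring)
  have hcont' : ContinuousOn f' (uIcc (0:ℝ) h) := by fun_prop
  have himg : ∀ t ∈ f '' uIcc (0:ℝ) h, t < 1 := by
    rintro t ⟨u, hu, rfl⟩
    rw [uIcc_of_le hh0] at hu
    have h1 : (r - u)^2 > 0 := by
      have : r - u > 0 := by linarith [hu.2]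
      positivity
    rw [hf]
    rw [div_lt_one (by positivity)]
    nlinarith
  have hGcont : ContinuousOn G (f '' uIcc (0:ℝ) h) := by
    intro t ht
    apply ContinuousAt.continuousWithinAt
    apply ContinuousAt.mul
    · exact (Real.continuous_sqrt.pow d).continuousAt
    · exact (Real.continuousAt_rpow_const _ _
        (Or.inl (sub_ne_zero.mpr (ne_of_gt (by linarith [himg t ht]))))).comp
        ((continuous_const.sub continuous_id).continuousAt)
  have hsub := integral_comp_smul_deriv' hder hcont' hGcont
  have hstep : (∫ x in (0:ℝ)..h, f' x • (G ∘ f) x)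
      = ∫ t in (0:ℝ)..((2*r*h - h^2)/r^2), G t := by
    rw [hsub]; norm_num [hf]
  rw [← hstep, ← intervalIntegral.integral_const_mul]
  apply intervalIntegral.integral_congr
  intro u hu
  rw [uIcc_of_le hh0] at hu
  have h2ru : (0:ℝ) ≤ 2*r*u - u^2 := by nlinarith [hu.1, hu.2]
  have hru : (0:ℝ) < r - u := by linarith [hu.2]
  simp only [smul_eq_mul, Function.comp, hG, hf, hf']
  rw [show (1 - (2*r*u - u^2)/r^2) = ((r-u)/r)^2 by field_simp; ring]
  rw [show ((2*r*u - u^2)/r^2) = (Real.sqrt (2*r*u - u^2)/r)^2 by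
    rw [div_pow, Real.sq_sqrt h2ru]]
  rw [Real.sqrt_sq (by positivity)]
  rw [← Real.rpow_natCast ((r-u)/r) 2, ← Real.rpow_mul (by positivity)]
  norm_num
  rw [Real.rpow_neg_one]
  rw [div_pow]
  field_simp
  ring

lemma capAux_G_integrable (d : ℕ) :
    IntegrableOn (fun t => Real.sqrt t ^ d * (1 - t) ^ (-(1/2) : ℝ))
      (uIcc (0:ℝ) 1) volume := by
  have hint : IntegrableOn (fun t : ℝ => (1 - t) ^ (-(1/2) : ℝ)) (uIcc (0:ℝ) 1) volume := by
    have h1 : IntervalIntegrable (fun x : ℝ => x ^ (-(1/2) : ℝ)) volume 0 1 :=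
      intervalIntegral.intervalIntegrable_rpow' (by norm_num)
    have h2 := (h1.comp_sub_left 1).symm
    norm_num at h2
    rw [intervalIntegrable_iff_integrableOn_Icc_of_le (by norm_num : (0:ℝ) ≤ 1)] at h2
    rwa [uIcc_of_le (by norm_num : (0:ℝ) ≤ 1)]
  apply Integrable.mono hint
  · have hm : Measurable fun t : ℝ => (1 - t) ^ (-(1/2) : ℝ) :=
      by fun_prop
    exact (((Real.continuous_sqrt.pow d).measurable).mul hm).aestronglyMeasurable
  · rw [uIcc_of_le (by norm_num : (0:ℝ) ≤ 1)]
    rw [ae_restrict_iff' measurableSet_Icc]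
    apply Eventually.of_forall
    intro t ht
    have h1t : (0:ℝ) ≤ 1 - t := by linarith [ht.2]
    simp only [Real.norm_eq_abs]
    rw [abs_of_nonneg (by positivity), abs_of_nonneg (Real.rpow_nonneg h1t _)]
    have h1 : Real.sqrt t ^ d ≤ 1 := by
      apply pow_le_one₀ (Real.sqrt_nonneg t)
      rw [show (1:ℝ) = Real.sqrt 1 by simp]
      exact Real.sqrt_le_sqrt ht.2
    nlinarith [Real.rpow_nonneg h1t (-(1/2) : ℝ), pow_nonneg (Real.sqrt_nonneg t) d]

lemma capAux_subst (d : ℕ) (r h : ℝ) (hr : 0 < r) (hh0 : 0 ≤ h) (hhr : h ≤ r) :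
    ∫ t in (0:ℝ)..(2*r*h - h^2)/r^2, Real.sqrt t ^ d * (1 - t) ^ (-(1/2) : ℝ)
      = (2 / r^(d+1)) * ∫ u in (0:ℝ)..h, Real.sqrt (2*r*u - u^2) ^ d := by
  rcases lt_or_eq_of_le hhr with hlt | heq
  · exact capAux_subst_lt d r h hr hh0 hlt
  rw [heq]
  set G : ℝ → ℝ := fun t => Real.sqrt t ^ d * (1 - t) ^ (-(1/2) : ℝ) with hG
  set K : ℝ → ℝ := fun h => ∫ t in (0:ℝ)..(2*r*h - h^2)/r^2, G t with hK
  set J : ℝ → ℝ := fun h => (2 / r^(d+1)) * ∫ u in (0:ℝ)..h, Real.sqrt (2*r*u - u^2) ^ d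
    with hJ
  show K r = J r
  have hx : ∀ h : ℝ, 0 ≤ h → h ≤ r → (2*r*h - h^2)/r^2 ∈ Icc (0:ℝ) 1 := by
    intro h h0 h1
    constructor
    · apply div_nonneg (by nlinarith) (by positivity)
    · rw [div_le_one (by positivity)]; nlinarith
  have hKcont : ContinuousOn K (Icc 0 r) := by
    have hP : ContinuousOn (fun y => ∫ t in (0:ℝ)..y, G t) (uIcc (0:ℝ) 1) :=
      continuousOn_primitive_interval (capAux_G_integrable d)
    rw [uIcc_of_le (by norm_num : (0:ℝ) ≤ 1)] at hP
    apply hP.comp (by fun_prop)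
    intro h hh
    exact hx h hh.1 hh.2
  have hJcont : Continuous J := by
    apply Continuous.mul continuous_const
    apply intervalIntegral.continuous_primitive
    intro a b
    exact (Continuous.intervalIntegrable (by continuity) a b)
  have hne : (𝓝[Ico (0:ℝ) r] r).NeBot := right_nhdsWithin_Ico_neBot hr
  have h1 : Tendsto K (𝓝[Ico (0:ℝ) r] r) (𝓝 (K r)) :=
    (hKcont r (by constructor <;> linarith)).mono_left
      (nhdsWithin_mono _ Ico_subset_Icc_self)
  have h2 : Tendsto J (𝓝[Ico (0:ℝ) r] r) (𝓝 (J r)) :=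
    (hJcont.continuousAt).continuousWithinAt
  have h3 : K =ᶠ[𝓝[Ico (0:ℝ) r] r] J := by
    filter_upwards [eventually_mem_nhdsWithin] with y hy
    exact capAux_subst_lt d r y hr hy.1 hy.2
  exact tendsto_nhds_unique (h1.congr' h3) h2

lemma capAux_comp_sub (d : ℕ) (r h : ℝ) :
    ∫ t in (r - h)..r, Real.sqrt (r^2 - t^2) ^ d
      = ∫ u in (0:ℝ)..h, Real.sqrt (2*r*u - u^2) ^ d := by
  have key := intervalIntegral.integral_comp_sub_left (a := (0:ℝ)) (b := h)
    (fun t => Real.sqrt (r^2 - t^2) ^ d) r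
  rw [sub_zero] at key
  rw [← key]
  apply intervalIntegral.integral_congr
  intro u _
  simp only
  rw [show r^2 - (r - u)^2 = 2*r*u - u^2 by ring]

end capAux

/-- the volume of a hyperspherical cap of height `h` (`0 ≤ h ≤ r`) of the
`(d+1)`-dimensional Euclidean ball of radius `r` (the part of `B(0;r)` above the
hyperplane where the last coordinate equals `r − h`) equals
`(1/2) · V_S · I_{(2rh−h²)/r²}(((d+1)+1)/2, 1/2)`. -/
theorem stmt_6 (d : ℕ) (r hh : ℝ) (hr : 0 < r) (hh0 : 0 ≤ hh) (hhr : hh ≤ r) :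
    (volume {y : EuclideanSpace ℝ (Fin (d + 1)) |
        y ∈ Metric.closedBall (0 : EuclideanSpace ℝ (Fin (d + 1))) r ∧
        r - hh ≤ y (Fin.last d)}).toReal =
      (1 / 2) * (volume (Metric.closedBall (0 : EuclideanSpace ℝ (Fin (d + 1))) r)).toReal *
        regIncBeta (((d : ℝ) + 2) / 2) (1 / 2)
          ((2 * r * hh - hh ^ 2) / r ^ 2) := by
  set κ := volume (Metric.ball (0 : EuclideanSpace ℝ (Fin d)) 1) with hκ
  set g : ℝ → ℝ := fun t => Real.sqrt (r^2 - t^2) ^ d with hg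
  have hgc : Continuous g := by rw [hg]; continuity
  have hgnn : ∀ t, 0 ≤ g t := fun t => by rw [hg]; positivity
  -- cap volume
  have hcap := capAux_slice d r (r - hh) hr (by linarith) (by linarith)
  -- ball as a cap
  have hball_set : {y : EuclideanSpace ℝ (Fin (d + 1)) |
        y ∈ Metric.closedBall (0 : EuclideanSpace ℝ (Fin (d + 1))) r ∧
        -r ≤ y (Fin.last d)} = Metric.closedBall (0 : EuclideanSpace ℝ (Fin (d + 1))) r := by
    ext y
    simp only [Set.mem_setOf_eq, Metric.mem_closedBall, dist_zero_right]
    constructor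
    · rintro ⟨h1, _⟩; exact h1
    · intro h1
      refine ⟨h1, ?_⟩
      have habs : |y (Fin.last d)| ≤ ‖y‖ := by
        rw [EuclideanSpace.norm_eq, ← Real.sqrt_sq_eq_abs]
        apply Real.sqrt_le_sqrt
        have := Finset.single_le_sum (f := fun i => ‖y i‖^2)
          (fun i _ => by positivity) (Finset.mem_univ (Fin.last d))
        simpa [sq_abs] using this
      have := neg_abs_le (y (Fin.last d))
      linarith
  have hball := capAux_slice d r (-r) hr (by linarith) (by linarith)
  rw [hball_set] at hball
  -- evenness of g
  have heven : ∫ t in (-r)..r, g t = 2 * ∫ t in (0:ℝ)..r, g t := by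
    have h1 : ∫ t in (-r)..(0:ℝ), g t = ∫ t in (0:ℝ)..r, g t := by
      have key := intervalIntegral.integral_comp_neg (a := (0:ℝ)) (b := r) (f := g)
      rw [neg_zero] at key
      rw [← key]
      apply intervalIntegral.integral_congr
      intro t _
      rw [hg]
      simp
    have h2 := intervalIntegral.integral_add_adjacent_intervals
      (hgc.intervalIntegrable (μ := volume) (-r) 0) (hgc.intervalIntegrable (μ := volume) 0 r)
    rw [← h2, h1]
    ring
  -- comp-sub forms
  have hcapI : ∫ t in (r - hh)..r, g t = ∫ u in (0:ℝ)..hh, Real.sqrt (2*r*u - u^2) ^ d :=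
    capAux_comp_sub d r hh
  have hfullI : ∫ t in (0:ℝ)..r, g t = ∫ u in (0:ℝ)..r, Real.sqrt (2*r*u - u^2) ^ d := by
    have := capAux_comp_sub d r r
    rwa [sub_self] at this
  set B1 := ∫ u in (0:ℝ)..hh, Real.sqrt (2*r*u - u^2) ^ d with hB1
  set B2 := ∫ u in (0:ℝ)..r, Real.sqrt (2*r*u - u^2) ^ d with hB2
  have hB1nn : 0 ≤ B1 := by
    rw [hB1]
    apply intervalIntegral.integral_nonneg hh0
    intro u _
    positivity
  have hB2pos : 0 < B2 := by
    rw [hB2]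
    have hint : IntervalIntegrable (fun u : ℝ => Real.sqrt (2*r*u - u^2) ^ d) volume 0 r :=
      Continuous.intervalIntegrable (by continuity) 0 r
    refine intervalIntegral.intervalIntegral_pos_of_pos_on hint (fun u hu => ?_) hr
    have h1 : 0 < 2*r*u - u^2 := by nlinarith [hu.1, hu.2]
    positivity
  -- regIncBeta value
  have hbeta : regIncBeta (((d : ℝ) + 2) / 2) (1 / 2) ((2 * r * hh - hh ^ 2) / r ^ 2)
      = ((2 / r^(d+1)) * B1) / ((2 / r^(d+1)) * B2) := by
    have hconv : ∀ X : ℝ, 0 ≤ X → X ≤ 1 →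
        (∫ t in (0:ℝ)..X, t ^ (((d:ℝ)+2)/2 - 1) * (1-t) ^ ((1:ℝ)/2 - 1))
          = ∫ t in (0:ℝ)..X, Real.sqrt t ^ d * (1-t) ^ (-(1/2) : ℝ) := by
      intro X h0 h1
      apply intervalIntegral.integral_congr
      intro t ht
      rw [Set.uIcc_of_le h0] at ht
      show t ^ (((d:ℝ)+2)/2 - 1) * (1 - t) ^ ((1:ℝ)/2 - 1)
        = Real.sqrt t ^ d * (1 - t) ^ (-(1/2) : ℝ)
      congr 1
      · rw [show ((d:ℝ)+2)/2 - 1 = (1/2 : ℝ) * d by ring,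
          Real.rpow_mul ht.1, ← Real.sqrt_eq_rpow, Real.rpow_natCast]
      · norm_num
    have hX0 : (0:ℝ) ≤ (2 * r * hh - hh ^ 2) / r ^ 2 := by
      apply div_nonneg (by nlinarith) (by positivity)
    have hX1 : (2 * r * hh - hh ^ 2) / r ^ 2 ≤ 1 := by
      rw [div_le_one (by positivity)]; nlinarith
    have hnum := capAux_subst d r hh hr hh0 hhr
    have hden := capAux_subst d r r hr hr.le le_rfl
    rw [show (2*r*r - r^2)/r^2 = (1:ℝ) by field_simp; ring] at hden
    rw [regIncBeta, hconv _ hX0 hX1, hconv 1 zero_le_one le_rfl]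
    rw [show (2 * r * hh - hh ^ 2) / r ^ 2 = (2*r*hh - hh^2)/r^2 by ring_nf]
    rw [hnum, hden]
  -- put everything together
  rw [hcap, hball, hbeta, ENNReal.toReal_mul, ENNReal.toReal_mul,
    ENNReal.toReal_ofReal (intervalIntegral.integral_nonneg (by linarith) fun t _ => hgnn t),
    ENNReal.toReal_ofReal (intervalIntegral.integral_nonneg (by linarith) fun t _ => hgnn t),
    hcapI, heven, hfullI]
  have hc : (2 / r^(d+1) : ℝ) ≠ 0 := by positivity
  rw [mul_div_mul_left _ _ hc]
  field_simp
end

section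
/- For two d-dimensional Euclidean balls of equal radius r with centers at distance ε, the ratio V_U/V_S = 2·(1 − I_{1−ε²/(4r²)}((d+1)/2, 1/2)) is monotonically increasing in ε on [0, 2r], with value 0 at ε = 0 and value 2 at ε = 2r. -/
open MeasureTheory

set_option maxHeartbeats 1000000

section aux

variable {a : ℝ}

private lemma aux_integrable (ha : 1 ≤ a) {x y : ℝ} (hx : x ∈ Set.Icc (0:ℝ) 1)
    (hy : y ∈ Set.Icc (0:ℝ) 1) :
    IntervalIntegrable (fun t : ℝ => t ^ (a - 1) * (1 - t) ^ ((1:ℝ)/2 - 1)) volume x y := by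
  have h0 : IntervalIntegrable (fun u : ℝ => u ^ ((1:ℝ)/2 - 1)) volume 0 1 :=
    intervalIntegral.intervalIntegrable_rpow' (by norm_num)
  have hg : IntervalIntegrable (fun t : ℝ => (1 - t) ^ ((1:ℝ)/2 - 1)) volume 0 1 := by
    have h1 := (h0.comp_sub_left 1).symm
    norm_num at h1 ⊢
    exact h1
  have hc : ContinuousOn (fun t : ℝ => t ^ (a - 1)) (Set.uIcc (0:ℝ) 1) :=
    (Real.continuous_rpow_const (by linarith)).continuousOn
  have hf := hg.continuousOn_mul hc
  refine hf.mono_set ?_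
  rw [Set.uIcc_subset_uIcc_iff_mem, Set.uIcc_of_le (zero_le_one)]
  exact ⟨hx, hy⟩

private lemma aux_nonneg (ha : 1 ≤ a) {t : ℝ} (ht : t ∈ Set.Icc (0:ℝ) 1) :
    0 ≤ t ^ (a - 1) * (1 - t) ^ ((1:ℝ)/2 - 1) :=
  mul_nonneg (Real.rpow_nonneg ht.1 _) (Real.rpow_nonneg (by linarith [ht.2]) _)

private lemma aux_den_pos (ha : 1 ≤ a) :
    0 < ∫ t in (0:ℝ)..1, t ^ (a - 1) * (1 - t) ^ ((1:ℝ)/2 - 1) := by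
  refine intervalIntegral.intervalIntegral_pos_of_pos_on
    (aux_integrable ha (by simp) (by simp)) (fun t ht => ?_) one_pos
  exact mul_pos (Real.rpow_pos_of_pos ht.1 _) (Real.rpow_pos_of_pos (by linarith [ht.2]) _)

/-- `x ↦ ∫₀ˣ f` is monotone on `[0,1]`. -/
private lemma aux_mono (ha : 1 ≤ a) {x y : ℝ} (hx : x ∈ Set.Icc (0:ℝ) 1)
    (hy : y ∈ Set.Icc (0:ℝ) 1) (hxy : x ≤ y) :
    (∫ t in (0:ℝ)..x, t ^ (a - 1) * (1 - t) ^ ((1:ℝ)/2 - 1)) ≤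
      ∫ t in (0:ℝ)..y, t ^ (a - 1) * (1 - t) ^ ((1:ℝ)/2 - 1) := by
  have h1 := aux_integrable ha (show (0:ℝ) ∈ Set.Icc (0:ℝ) 1 by simp) hx
  have h2 := aux_integrable ha hx hy
  have hsplit := intervalIntegral.integral_add_adjacent_intervals h1 h2
  have hnn : 0 ≤ ∫ t in x..y, t ^ (a - 1) * (1 - t) ^ ((1:ℝ)/2 - 1) := by
    refine intervalIntegral.integral_nonneg hxy (fun t ht => ?_)
    exact aux_nonneg ha ⟨le_trans hx.1 ht.1, le_trans ht.2 hy.2⟩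
  linarith

end aux

/-- the ratio `ε ↦ V_U/V_S = 2·(1 − I_{1−ε²/(4r²)}((d+1)/2, 1/2))` is
monotonically increasing on `[0, 2r]`, with value `0` at `ε = 0` and `2` at `ε = 2r`. -/
theorem stmt_14 (d : ℕ) (hd : 1 ≤ d) (r : ℝ) (hr : 0 < r) :
    MonotoneOn (fun ε : ℝ =>
        2 * (1 - regIncBeta (((d : ℝ) + 1) / 2) (1 / 2) (1 - ε ^ 2 / (4 * r ^ 2))))
      (Set.Icc 0 (2 * r)) ∧
    2 * (1 - regIncBeta (((d : ℝ) + 1) / 2) (1 / 2) (1 - (0 : ℝ) ^ 2 / (4 * r ^ 2))) = 0 ∧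
    2 * (1 - regIncBeta (((d : ℝ) + 1) / 2) (1 / 2) (1 - (2 * r) ^ 2 / (4 * r ^ 2))) = 2 := by
  set a : ℝ := ((d : ℝ) + 1) / 2 with ha_def
  have hd1 : (1:ℝ) ≤ (d:ℝ) := by exact_mod_cast hd
  have ha : 1 ≤ a := by rw [ha_def]; linarith
  have hr2 : (0:ℝ) < 4 * r ^ 2 := by positivity
  have hDpos := aux_den_pos ha
  have hmem : ∀ ε : ℝ, ε ∈ Set.Icc 0 (2*r) →
      (1 - ε ^ 2 / (4 * r ^ 2)) ∈ Set.Icc (0:ℝ) 1 := by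
    intro ε hε
    obtain ⟨h0, h2r⟩ := hε
    constructor
    · rw [sub_nonneg, div_le_one hr2]
      nlinarith
    · have : 0 ≤ ε ^ 2 / (4 * r ^ 2) := by positivity
      linarith
  refine ⟨?_, ?_, ?_⟩
  · intro ε₁ h₁ ε₂ h₂ h12
    have hx₁ := hmem ε₁ h₁
    have hx₂ := hmem ε₂ h₂
    have hle : 1 - ε₂ ^ 2 / (4 * r ^ 2) ≤ 1 - ε₁ ^ 2 / (4 * r ^ 2) := by
      have h : ε₁ ^ 2 ≤ ε₂ ^ 2 := by nlinarith [h₁.1]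
      have h' : ε₁ ^ 2 / (4 * r ^ 2) ≤ ε₂ ^ 2 / (4 * r ^ 2) := by gcongr
      linarith
    have hmono := aux_mono ha hx₂ hx₁ hle
    simp only [regIncBeta]
    have hdiv : (∫ t in (0:ℝ)..(1 - ε₂ ^ 2 / (4 * r ^ 2)),
          t ^ (a - 1) * (1 - t) ^ ((1:ℝ)/2 - 1)) /
          (∫ t in (0:ℝ)..1, t ^ (a - 1) * (1 - t) ^ ((1:ℝ)/2 - 1)) ≤
        (∫ t in (0:ℝ)..(1 - ε₁ ^ 2 / (4 * r ^ 2)),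
          t ^ (a - 1) * (1 - t) ^ ((1:ℝ)/2 - 1)) /
          (∫ t in (0:ℝ)..1, t ^ (a - 1) * (1 - t) ^ ((1:ℝ)/2 - 1)) := by gcongr
    linarith
  · have h1 : (1:ℝ) - (0:ℝ)^2 / (4 * r ^ 2) = 1 := by
      field_simp
      ring
    rw [h1]
    simp only [regIncBeta]
    rw [div_self]
    · ring
    · exact ne_of_gt hDpos
  · have h0 : (1:ℝ) - (2*r)^2 / (4 * r ^ 2) = 0 := by
      field_simp; ring
    rw [h0]
    simp only [regIncBeta]
    rw [intervalIntegral.integral_same, zero_div]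
    ring
end
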